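/- Let (Θ, 𝒮, Π) be a probability space, (E, ℰ, ν) a σ-finite measure space, and p : Θ × E → [0,∞) jointly measurable with ∫_E p(b,x) ν(dx) = 1 for every b ∈ Θ. Let p₀ : E → (0,∞) be a measurable probability density with respect to ν and let P₀ be the probability measure on E with density p₀. Let B ∈ 𝒮 with Π(B) > 0 and let a > 0 be such that for every b ∈ B: p(b,x) > 0 for ν-a.e. x, ∫ p₀(x) log(p₀(x)/p(b,x)) ν(dx) ≤ a, and ∫ p₀(x) (log(p₀(x)/p(b,x)))² ν(dx) − (∫ p₀(x) log(p₀(x)/p(b,x)) ν(dx))² ≤ a. Assume moreover that (b,x) ↦ log(p₀(x)/p(b,x)) is square-integrable with respect to the product of the normalised restriction Π(·∩B)/Π(B) and P₀. Then for every t > 0, P₀({x ∈ E : ∫_Θ (p(b,x)/p₀(x)) Π(db) < Π(B) e^{-(a+t)}}) ≤ a/t². -/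

import Mathlib

open MeasureTheory

lemma aux_transfer {E : Type*} [MeasurableSpace E] (ν : Measure E)
    (p₀ : E → ℝ) (hp₀meas : Measurable p₀) (hp₀pos : ∀ x, 0 < p₀ x)
    (g : E → ℝ) :
    ∫ x, g x ∂(ν.withDensity fun x => ENNReal.ofReal (p₀ x)) = ∫ x, p₀ x * g x ∂ν := by
  rw [show (fun x => ENNReal.ofReal (p₀ x)) = (fun x => ((p₀ x).toNNReal : ENNReal)) from rfl,
    integral_withDensity_eq_integral_smul (f := fun x => (p₀ x).toNNReal) hp₀meas.real_toNNReal g]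
  congr 1; ext x
  simp [NNReal.smul_def, Real.coe_toNNReal _ (hp₀pos x).le]

lemma aux_sq_integral {α : Type*} [MeasurableSpace α] (μ : Measure α) [IsProbabilityMeasure μ]
    {g : α → ℝ} (hg : MemLp g 2 μ) : (∫ x, g x ∂μ) ^ 2 ≤ ∫ x, g x ^ 2 ∂μ := by
  have h := ProbabilityTheory.variance_nonneg g μ
  rw [ProbabilityTheory.variance_eq_sub hg] at h
  simp only [Pi.pow_apply] at h
  linarith

lemma aux_exp_jensen {α : Type*} [MeasurableSpace α] (μ : Measure α) [IsProbabilityMeasure μ]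
    {g : α → ℝ} (hg : Integrable g μ) (hexp : Integrable (fun x => Real.exp (g x)) μ) :
    Real.exp (∫ x, g x ∂μ) ≤ ∫ x, Real.exp (g x) ∂μ :=
  convexOn_exp.map_integral_le Real.continuous_exp.continuousOn isClosed_univ
    (Filter.Eventually.of_forall fun _ => Set.mem_univ _) hg hexp

theorem statement5 {Θ E : Type*} [MeasurableSpace Θ] [MeasurableSpace E]
    (Pr : Measure Θ) [IsProbabilityMeasure Pr]
    (ν : Measure E) [SigmaFinite ν]
    (p : Θ → E → ℝ) (hpmeas : Measurable (Function.uncurry p))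
    (hpnn : ∀ b x, 0 ≤ p b x)
    (hpdens : ∀ b, ∫ x, p b x ∂ν = 1)
    (p₀ : E → ℝ) (hp₀meas : Measurable p₀) (hp₀pos : ∀ x, 0 < p₀ x)
    (hp₀dens : ∫ x, p₀ x ∂ν = 1)
    (P₀ : Measure E) [IsProbabilityMeasure P₀]
    (hP₀ : P₀ = ν.withDensity fun x => ENNReal.ofReal (p₀ x))
    (B : Set Θ) (hB : MeasurableSet B) (hPrB : 0 < Pr B)
    (a : ℝ) (ha : 0 < a)
    (hpos : ∀ b ∈ B, ∀ᵐ x ∂ν, 0 < p b x)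
    (hKL : ∀ b ∈ B, ∫ x, p₀ x * Real.log (p₀ x / p b x) ∂ν ≤ a)
    (hVar : ∀ b ∈ B, ∫ x, p₀ x * (Real.log (p₀ x / p b x)) ^ 2 ∂ν
        - (∫ x, p₀ x * Real.log (p₀ x / p b x) ∂ν) ^ 2 ≤ a)
    (Pr' : Measure Θ) [IsProbabilityMeasure Pr']
    (hPr' : Pr' = (Pr B)⁻¹ • Pr.restrict B)
    (hsq : MemLp (fun q : Θ × E => Real.log (p₀ q.2 / p q.1 q.2)) 2 (Pr'.prod P₀)) :
    ∀ t : ℝ, 0 < t →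
      P₀ {x | ∫ b, p b x / p₀ x ∂Pr < (Pr B).toReal * Real.exp (-(a + t))}
        ≤ ENNReal.ofReal (a / t ^ 2) := by
  intro t ht
  set F : Θ × E → ℝ := fun q => Real.log (p₀ q.2 / p q.1 q.2) with hFdef
  have hT : ∀ g : E → ℝ, ∫ x, g x ∂P₀ = ∫ x, p₀ x * g x ∂ν := fun g => by
    rw [hP₀]; exact aux_transfer ν p₀ hp₀meas hp₀pos g
  have hac : P₀ ≪ ν := hP₀ ▸ withDensity_absolutelyContinuous ν _
  have hPrB' : (0:ℝ) < (Pr B).toReal := ENNReal.toReal_pos hPrB.ne' (measure_ne_top _ _)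
  have hPr'Bc : Pr' Bᶜ = 0 := by
    rw [hPr', Measure.smul_apply, Measure.restrict_apply hB.compl]
    simp
  have hPr'ae : ∀ᵐ b ∂Pr', b ∈ B := by
    rw [ae_iff]
    simpa [Set.compl_def] using hPr'Bc
  -- transferred hypotheses
  have hKL' : ∀ b ∈ B, ∫ x, F (b, x) ∂P₀ ≤ a := fun b hb => by
    rw [hT]; exact hKL b hb
  have hVar' : ∀ b ∈ B, ∫ x, F (b, x) ^ 2 ∂P₀ - (∫ x, F (b, x) ∂P₀) ^ 2 ≤ a := fun b hb => by
    rw [hT, hT]; exact hVar b hb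
  -- integrability on the product
  have hFint : Integrable F (Pr'.prod P₀) := hsq.integrable one_le_two
  have hF2int : Integrable (fun q => F q ^ 2) (Pr'.prod P₀) := hsq.integrable_sq
  have hsec : ∀ᵐ b ∂Pr', Integrable (fun x => F (b, x)) P₀ := hFint.prod_right_ae
  have hsec2 : ∀ᵐ b ∂Pr', Integrable (fun x => F (b, x) ^ 2) P₀ := hF2int.prod_right_ae
  have hxsec : ∀ᵐ x ∂P₀, Integrable (fun b => F (b, x)) Pr' := hFint.prod_left_ae
  have hxsec2 : ∀ᵐ x ∂P₀, Integrable (fun b => F (b, x) ^ 2) Pr' := hF2int.prod_left_ae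
  set m : Θ → ℝ := fun b => ∫ x, F (b, x) ∂P₀ with hmdef
  set Z : E → ℝ := fun x => ∫ b, F (b, x) ∂Pr' with hZdef
  have hm_int : Integrable m Pr' := hFint.integral_prod_left
  have hZ_int : Integrable Z P₀ := hFint.integral_prod_right
  have hK_int : Integrable (fun b => ∫ x, F (b, x) ^ 2 ∂P₀) Pr' := hF2int.integral_prod_left
  have hH_int : Integrable (fun x => ∫ b, F (b, x) ^ 2 ∂Pr') P₀ := hF2int.integral_prod_right
  have hxmem : ∀ᵐ x ∂P₀, MemLp (fun b => F (b, x)) 2 Pr' := by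
    filter_upwards [hxsec, hxsec2] with x h1 h2
    exact (memLp_two_iff_integrable_sq h1.aestronglyMeasurable).2 h2
  have hbmem : ∀ᵐ b ∂Pr', MemLp (fun x => F (b, x)) 2 P₀ := by
    filter_upwards [hsec, hsec2] with b h1 h2
    exact (memLp_two_iff_integrable_sq h1.aestronglyMeasurable).2 h2
  -- m is in L²(Pr')
  have hm_meas : AEStronglyMeasurable m Pr' := hm_int.aestronglyMeasurable
  have hm_mem : MemLp m 2 Pr' := by
    refine (memLp_two_iff_integrable_sq hm_meas).2 ?_
    refine Integrable.mono' hK_int (by simpa [pow_two, Pi.mul_def] using hm_meas.mul hm_meas) ?_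
    filter_upwards [hbmem] with b hb
    rw [Real.norm_eq_abs, abs_of_nonneg (sq_nonneg _)]
    exact aux_sq_integral P₀ hb
  -- Z is in L²(P₀)
  have hZ_meas : AEStronglyMeasurable Z P₀ := hZ_int.aestronglyMeasurable
  have hZ_mem : MemLp Z 2 P₀ := by
    refine (memLp_two_iff_integrable_sq hZ_meas).2 ?_
    refine Integrable.mono' hH_int (by simpa [pow_two, Pi.mul_def] using hZ_meas.mul hZ_meas) ?_
    filter_upwards [hxmem] with x hx
    rw [Real.norm_eq_abs, abs_of_nonneg (sq_nonneg _)]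
    exact aux_sq_integral Pr' hx
  -- Fubini for the mean
  have hswap : ∫ b, m b ∂Pr' = ∫ x, Z x ∂P₀ := by
    exact integral_integral_swap (f := fun b x => F (b, x)) hFint
  have hμZ : ∫ x, Z x ∂P₀ ≤ a := by
    rw [← hswap]
    calc ∫ b, m b ∂Pr' ≤ ∫ _, a ∂Pr' := by
          refine integral_mono_ae hm_int (integrable_const a) ?_
          filter_upwards [hPr'ae] with b hb using hKL' b hb
      _ = a := by simp
  -- variance bound
  have hMfst : MemLp (fun q : Θ × E => m q.1) 2 (Pr'.prod P₀) := by
    refine hm_mem.comp_measurePreserving (f := Prod.fst) ⟨measurable_fst, ?_⟩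
    rw [Measure.map_fst_prod]; simp
  have hFm_mem : MemLp (fun q : Θ × E => F q - m q.1) 2 (Pr'.prod P₀) := hsq.sub hMfst
  have hGint : Integrable (fun q : Θ × E => (F q - m q.1) ^ 2) (Pr'.prod P₀) := hFm_mem.integrable_sq
  have hVarZ : ProbabilityTheory.variance Z P₀ ≤ a := by
    have hveq : ProbabilityTheory.variance Z P₀
        = ∫ x, (Z x - ∫ y, Z y ∂P₀) ^ 2 ∂P₀ := by
      rw [ProbabilityTheory.variance_eq_integral hZ_mem.aemeasurable]
    have hGx : ∀ᵐ x ∂P₀, (Z x - ∫ y, Z y ∂P₀) ^ 2 ≤ ∫ b, (F (b, x) - m b) ^ 2 ∂Pr' := by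
      filter_upwards [hxmem, hxsec] with x hx hxi
      have hmem : MemLp (fun b => F (b, x) - m b) 2 Pr' := hx.sub hm_mem
      have h1 : Z x - ∫ y, Z y ∂P₀ = ∫ b, (F (b, x) - m b) ∂Pr' := by
        rw [integral_sub hxi hm_int, hswap]
      rw [h1]
      exact aux_sq_integral Pr' hmem
    have hstep : ∫ x, (Z x - ∫ y, Z y ∂P₀) ^ 2 ∂P₀
        ≤ ∫ x, (∫ b, (F (b, x) - m b) ^ 2 ∂Pr') ∂P₀ := by
      refine integral_mono_ae ?_ hGint.integral_prod_right hGx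
      exact (hZ_mem.sub (memLp_const _)).integrable_sq
    have hswap2 : ∫ x, (∫ b, (F (b, x) - m b) ^ 2 ∂Pr') ∂P₀
        = ∫ b, (∫ x, (F (b, x) - m b) ^ 2 ∂P₀) ∂Pr' :=
      (integral_integral_swap (f := fun b x => (F (b, x) - m b) ^ 2) hGint).symm
    have hbbound : ∀ᵐ b ∂Pr', ∫ x, (F (b, x) - m b) ^ 2 ∂P₀ ≤ a := by
      filter_upwards [hPr'ae, hbmem] with b hbB hbm
      have hint1 : Integrable (fun x => F (b, x)) P₀ := hbm.integrable one_le_two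
      have hint2 : Integrable (fun x => F (b, x) ^ 2) P₀ := hbm.integrable_sq
      have h2 : Integrable (fun x => 2 * F (b, x) * m b) P₀ := (hint1.const_mul 2).mul_const (m b)
      have hexp : ∫ x, (F (b, x) - m b) ^ 2 ∂P₀
          = ∫ x, F (b, x) ^ 2 ∂P₀ - m b ^ 2 := by
        rw [show (fun x => (F (b, x) - m b) ^ 2)
            = fun x => F (b, x) ^ 2 - 2 * F (b, x) * m b + m b ^ 2 by funext x; ring]
        have h3 : Integrable (fun x => F (b, x) ^ 2 - 2 * F (b, x) * m b) P₀ := hint2.sub h2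
        rw [integral_add h3 (integrable_const _), integral_sub hint2 h2,
          integral_const, integral_mul_const, integral_const_mul]
        have hmb : ∫ x, F (b, x) ∂P₀ = m b := rfl
        rw [hmb]
        simp [measure_univ]
        ring
      rw [hexp]
      have := hVar' b hbB
      have hmb : (m b) = ∫ x, F (b, x) ∂P₀ := rfl
      rw [hmb]
      linarith
    have hfinal : ∫ b, (∫ x, (F (b, x) - m b) ^ 2 ∂P₀) ∂Pr' ≤ a := by
      calc ∫ b, (∫ x, (F (b, x) - m b) ^ 2 ∂P₀) ∂Pr' ≤ ∫ _, a ∂Pr' :=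
            integral_mono_ae hGint.integral_prod_left (integrable_const a) hbbound
        _ = a := by simp
    rw [hveq]
    linarith [hstep, hswap2 ▸ hfinal]
  -- a.e. positivity of p in b, for a.e. x
  have hSmeas : MeasurableSet {q : Θ × E | p q.1 q.2 ≤ 0} :=
    measurableSet_le hpmeas measurable_const
  have hprodnull : (Pr'.prod P₀) {q : Θ × E | p q.1 q.2 ≤ 0} = 0 := by
    rw [Measure.measure_prod_null hSmeas]
    filter_upwards [hPr'ae] with b hb
    have hν : ν {x | p b x ≤ 0} = 0 := by
      have h := hpos b hb
      rw [ae_iff] at h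
      simpa [not_lt] using h
    exact hac hν
  have hx2 : ∀ᵐ x ∂P₀, ∀ᵐ b ∂Pr', 0 < p b x := by
    have hS'meas : MeasurableSet {q : E × Θ | p q.2 q.1 ≤ 0} :=
      measurableSet_le (hpmeas.comp measurable_swap) measurable_const
    have h1 : (P₀.prod Pr') {q : E × Θ | p q.2 q.1 ≤ 0} = 0 := by
      rw [← Measure.prod_swap, Measure.map_apply measurable_swap hS'meas]
      exact hprodnull
    have h2 := Measure.measure_ae_null_of_prod_null h1
    filter_upwards [h2] with x hx
    rw [ae_iff]
    simpa [not_lt] using hx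
  -- a.e. integrability of p (·, x) with respect to Pr
  have hpint : ∀ b, Integrable (p b) ν := fun b => integrable_of_integral_eq_one (hpdens b)
  have hmeas2 : Measurable (fun q : Θ × E => ENNReal.ofReal (p q.1 q.2)) :=
    ENNReal.measurable_ofReal.comp hpmeas
  have hton : ∀ᵐ x ∂ν, ∫⁻ b, ENNReal.ofReal (p b x) ∂Pr < ⊤ := by
    have htot : ∫⁻ x, ∫⁻ b, ENNReal.ofReal (p b x) ∂Pr ∂ν = 1 := by
      rw [lintegral_lintegral_swap (f := fun (x : E) (b : Θ) => ENNReal.ofReal (p b x))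
        (by exact (hmeas2.comp measurable_swap).aemeasurable)]
      have hone : ∀ b, ∫⁻ x, ENNReal.ofReal (p b x) ∂ν = 1 := fun b => by
        rw [← ofReal_integral_eq_lintegral_ofReal (hpint b)
          (Filter.Eventually.of_forall (hpnn b)), hpdens b, ENNReal.ofReal_one]
      simp_rw [hone]
      simp
    refine ae_lt_top ?_ (by rw [htot]; exact ENNReal.one_ne_top)
    exact hmeas2.lintegral_prod_left'
  have hx3 : ∀ᵐ x ∂P₀, Integrable (fun b => p b x) Pr := by
    filter_upwards [hton.filter_mono hac.ae_le] with x hx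
    refine ⟨(hpmeas.comp (measurable_id.prodMk measurable_const)).aestronglyMeasurable, ?_⟩
    rw [hasFiniteIntegral_iff_ofReal (Filter.Eventually.of_forall fun b => hpnn b x)]
    exact hx
  -- Chebyshev
  have cheb := ProbabilityTheory.meas_ge_le_variance_div_sq hZ_mem ht
  -- event inclusion
  have hincl : {x | ∫ b, p b x / p₀ x ∂Pr < (Pr B).toReal * Real.exp (-(a + t))}
      ≤ᵐ[P₀] {x | t ≤ |Z x - ∫ y, Z y ∂P₀|} := by
    filter_upwards [hxsec, hx2, hx3] with x hFx hpx hintx hev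
    have hdiv_int : Integrable (fun b => p b x / p₀ x) Pr := hintx.div_const _
    have hnn : 0 ≤ᵐ[Pr] fun b => p b x / p₀ x :=
      Filter.Eventually.of_forall fun b => div_nonneg (hpnn b x) (hp₀pos x).le
    have hset : ∫ b in B, (p b x / p₀ x) ∂Pr ≤ ∫ b, p b x / p₀ x ∂Pr :=
      setIntegral_le_integral hdiv_int hnn
    have hPr'int : ∫ b, (p b x / p₀ x) ∂Pr' = ((Pr B).toReal)⁻¹ * ∫ b in B, (p b x / p₀ x) ∂Pr := by
      rw [hPr', integral_smul_measure]
      simp [ENNReal.toReal_inv]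
    have hdiv_int' : Integrable (fun b => p b x / p₀ x) Pr' := by
      rw [hPr']
      exact (hdiv_int.restrict).smul_measure (by simp [hPrB.ne'])
    have hlogeq : (fun b => Real.log (p b x / p₀ x)) = fun b => - F (b, x) := by
      funext b
      rw [hFdef]
      rw [← Real.log_inv, inv_div]
    have hlog_int : Integrable (fun b => Real.log (p b x / p₀ x)) Pr' := by
      rw [hlogeq]; exact hFx.neg
    have hexp_eq : (fun b => Real.exp (Real.log (p b x / p₀ x)))
        =ᵐ[Pr'] (fun b => p b x / p₀ x) := by
      filter_upwards [hpx] with b hb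
      exact Real.exp_log (div_pos hb (hp₀pos x))
    have hexpint : Integrable (fun b => Real.exp (Real.log (p b x / p₀ x))) Pr' :=
      hdiv_int'.congr hexp_eq.symm
    have hjensen := aux_exp_jensen Pr' hlog_int hexpint
    rw [integral_congr_ae hexp_eq] at hjensen
    have hlogint_eq : ∫ b, Real.log (p b x / p₀ x) ∂Pr' = - Z x := by
      rw [hlogeq, integral_neg]
    rw [hlogint_eq] at hjensen
    have key : (Pr B).toReal * Real.exp (- Z x) ≤ ∫ b, p b x / p₀ x ∂Pr := by
      calc (Pr B).toReal * Real.exp (-Z x)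
          ≤ (Pr B).toReal * ∫ b, p b x / p₀ x ∂Pr' :=
            mul_le_mul_of_nonneg_left hjensen hPrB'.le
        _ = ∫ b in B, p b x / p₀ x ∂Pr := by rw [hPr'int]; field_simp
        _ ≤ _ := hset
    have hexplt : Real.exp (-Z x) < Real.exp (-(a + t)) := by
      by_contra hcon
      push_neg at hcon
      have := mul_le_mul_of_nonneg_left hcon hPrB'.le
      have hev' : ∫ b, p b x / p₀ x ∂Pr < (Pr B).toReal * Real.exp (-(a + t)) := hev
      linarith
    have hZx : a + t < Z x := by
      have := Real.exp_lt_exp.1 hexplt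
      linarith
    show t ≤ |Z x - ∫ y, Z y ∂P₀|
    have : t < Z x - ∫ y, Z y ∂P₀ := by linarith [hμZ]
    exact le_trans this.le (le_abs_self _)
  calc P₀ {x | ∫ b, p b x / p₀ x ∂Pr < (Pr B).toReal * Real.exp (-(a + t))}
      ≤ P₀ {x | t ≤ |Z x - ∫ y, Z y ∂P₀|} := measure_mono_ae hincl
    _ ≤ ENNReal.ofReal (ProbabilityTheory.variance Z P₀ / t ^ 2) := cheb
    _ ≤ ENNReal.ofReal (a / t ^ 2) := by
        apply ENNReal.ofReal_le_ofReal
        gcongr
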